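/- arXiv:1703.09276 — 4 statements merged into one kernel-verified Lean document; each statement's English description precedes it below -/
import Mathlib

section
/- Let U be the group of upper unitriangular n×n real matrices and w a permutation matrix. Set U⁺ = U ∩ wUw⁻¹ and U⁻ = U ∩ wUᵀw⁻¹ (where Uᵀ denotes the set of transposes of elements of U, i.e. lower unitriangular matrices). Then every x ∈ U has a unique factorization x = x₋ x₊ with x₋ ∈ U⁻ and x₊ ∈ U⁺. -/
open Matrix Finset

/-- Upper unitriangular: upper triangular with unit diagonal. -/
def IsUniUpper {n : ℕ} (x : Matrix (Fin n) (Fin n) ℝ) : Prop :=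
  (∀ i j : Fin n, j < i → x i j = 0) ∧ ∀ i : Fin n, x i i = 1

namespace Stmt8Aux

variable {n : ℕ}

noncomputable def g (w : Equiv.Perm (Fin n)) (x : Matrix (Fin n) (Fin n) ℝ) :
    Fin n → Fin n → ℝ × ℝ := fun i j =>
  if _hij : i < j then
    let s := ∑ k ∈ (Finset.univ.filter fun k => i < k ∧ k < j).attach,
      (g w x i k.1).1 * (g w x k.1 j).2
    if w j < w i then (x i j - s, 0) else (0, x i j - s)
  else if i = j then (1, 1) else (0, 0)
termination_by i j => (j : ℕ) - (i : ℕ)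
decreasing_by
  · have hk := k.2
    simp only [Finset.mem_filter, Finset.mem_univ, true_and, Fin.lt_def] at hk
    omega
  · have hk := k.2
    simp only [Finset.mem_filter, Finset.mem_univ, true_and, Fin.lt_def] at hk
    omega

variable (w : Equiv.Perm (Fin n)) (x : Matrix (Fin n) (Fin n) ℝ)

/-- The candidate lower factor (in U⁻). -/
noncomputable def A : Matrix (Fin n) (Fin n) ℝ := fun i j => (g w x i j).1
/-- The candidate upper factor (in U⁺). -/
noncomputable def B : Matrix (Fin n) (Fin n) ℝ := fun i j => (g w x i j).2

noncomputable def S (i j : Fin n) : ℝ := ∑ k ∈ Finset.Ioo i j, A w x i k * B w x k j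

lemma g_eq (i j : Fin n) : g w x i j =
    if i < j then
      (if w j < w i then (x i j - S w x i j, 0) else (0, x i j - S w x i j))
    else if i = j then (1, 1) else (0, 0) := by
  rw [g]
  have hsum : ∑ k ∈ (Finset.univ.filter fun k => i < k ∧ k < j).attach,
      (g w x i k.1).1 * (g w x k.1 j).2 = S w x i j := by
    rw [Finset.sum_attach _ (fun k => (g w x i k).1 * (g w x k j).2)]
    unfold S A B
    apply Finset.sum_congr _ (fun _ _ => rfl)
    ext k
    simp [Finset.mem_Ioo]
  split_ifs with h1 h2 h3 <;> simp_all [hsum]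

lemma g_diag (i : Fin n) : g w x i i = (1, 1) := by
  rw [g_eq]; simp

lemma g_lower {i j : Fin n} (h : j < i) : g w x i j = (0, 0) := by
  rw [g_eq]
  rw [if_neg (by omega), if_neg (by intro he; subst he; exact lt_irrefl _ h)]

lemma g_upper {i j : Fin n} (h : i < j) : g w x i j =
    if w j < w i then (x i j - S w x i j, 0) else (0, x i j - S w x i j) := by
  rw [g_eq, if_pos h]

lemma A_diag (i : Fin n) : A w x i i = 1 := by unfold A; rw [g_diag]
lemma B_diag (i : Fin n) : B w x i i = 1 := by unfold B; rw [g_diag]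
lemma A_lower {i j : Fin n} (h : j < i) : A w x i j = 0 := by unfold A; rw [g_lower _ _ h]
lemma B_lower {i j : Fin n} (h : j < i) : B w x i j = 0 := by unfold B; rw [g_lower _ _ h]

lemma A_supp {i j : Fin n} (h : i < j) (hwij : w i < w j) : A w x i j = 0 := by
  unfold A; rw [g_upper _ _ h, if_neg (by exact fun hc => absurd hwij (not_lt.2 hc.le))]

lemma B_supp {i j : Fin n} (h : i < j) (hwij : w j < w i) : B w x i j = 0 := by
  unfold B; rw [g_upper _ _ h, if_pos hwij]

lemma AB_sum {i j : Fin n} (h : i < j) : A w x i j + B w x i j = x i j - S w x i j := by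
  unfold A B; rw [g_upper _ _ h]
  split_ifs <;> simp

/-- Splitting the convolution sum for a pair of matrices with the right triangularity. -/
lemma sum_split (a b : Matrix (Fin n) (Fin n) ℝ)
    (ha0 : ∀ i k : Fin n, k < i → a i k = 0) (hb0 : ∀ k j : Fin n, j < k → b k j = 0)
    {i j : Fin n} (hij : i < j) :
    ∑ k, a i k * b k j = a i i * b i j + a i j * b j j + ∑ k ∈ Finset.Ioo i j, a i k * b k j := by
  have h1 : ∑ k, a i k * b k j = ∑ k ∈ Finset.Icc i j, a i k * b k j := by
    symm
    apply Finset.sum_subset (Finset.subset_univ _)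
    intro k _ hk
    simp only [Finset.mem_Icc, not_and_or, not_le] at hk
    rcases hk with hk | hk
    · rw [ha0 _ _ hk, zero_mul]
    · rw [hb0 _ _ hk, mul_zero]
  rw [h1, Finset.Icc_eq_cons_Ioc hij.le, Finset.sum_cons,
    Finset.Ioc_eq_cons_Ioo hij, Finset.sum_cons]
  ring


variable {w} {x}

/-- existence: x = A * B (given x uniupper). -/
lemma mul_AB (hx : IsUniUpper x) : x = A w x * B w x := by
  ext i j
  rw [Matrix.mul_apply]
  rcases lt_trichotomy i j with h | h | h
  · rw [sum_split _ _ (fun i k hk => A_lower w x hk) (fun k j hk => B_lower w x hk) h,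
      A_diag, B_diag, one_mul, mul_one]
    have := AB_sum w x h
    unfold S at this
    linarith
  · subst h
    rw [Finset.sum_eq_single i]
    · rw [A_diag, B_diag, hx.2]; norm_num
    · intro k _ hk
      rcases lt_or_gt_of_ne hk with h' | h'
      · rw [A_lower w x h', zero_mul]
      · rw [B_lower w x h', mul_zero]
    · simp
  · rw [hx.1 i j h]
    symm
    apply Finset.sum_eq_zero
    intro k _
    rcases lt_or_ge k i with h' | h'
    · rw [A_lower w x h', zero_mul]
    · rw [B_lower w x (lt_of_lt_of_le h h'), mul_zero]

/-- uniqueness: any factorization with the right supports agrees with (A, B). -/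
lemma unique_AB (a b : Matrix (Fin n) (Fin n) ℝ)
    (ha1 : ∀ i j : Fin n, j < i → a i j = 0) (ha2 : ∀ i : Fin n, a i i = 1)
    (ha3 : ∀ i j : Fin n, i < j → w i < w j → a i j = 0)
    (hb1 : ∀ i j : Fin n, j < i → b i j = 0) (hb2 : ∀ i : Fin n, b i i = 1)
    (hb3 : ∀ i j : Fin n, i < j → w j < w i → b i j = 0)
    (hab : x = a * b) :
    a = A w x ∧ b = B w x := by
  have H : ∀ d : ℕ, ∀ i j : Fin n, (j : ℕ) - (i : ℕ) < d →
      a i j = A w x i j ∧ b i j = B w x i j := by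
    intro d
    induction d with
    | zero => intro i j h; exact absurd h (Nat.not_lt_zero _)
    | succ d ih =>
      intro i j hd
      rcases lt_trichotomy i j with h | h | h
      · have hx' : x i j = a i i * b i j + a i j * b j j +
            ∑ k ∈ Finset.Ioo i j, a i k * b k j := by
          rw [hab, Matrix.mul_apply]
          exact sum_split a b ha1 hb1 h
        have hS : ∑ k ∈ Finset.Ioo i j, a i k * b k j = S w x i j := by
          apply Finset.sum_congr rfl
          intro k hk
          simp only [Finset.mem_Ioo] at hk
          have h1 : (k : ℕ) - (i : ℕ) < d := by
            have := hk.1; have := hk.2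
            simp only [Fin.lt_def] at *
            omega
          have h2 : (j : ℕ) - (k : ℕ) < d := by
            have := hk.1; have := hk.2
            simp only [Fin.lt_def] at *
            omega
          rw [(ih i k h1).1, (ih k j h2).2]
        rw [ha2, hb2, one_mul, mul_one, hS] at hx'
        have hABs := AB_sum w x h
        have hwne : w i ≠ w j := fun hc => absurd (w.injective hc) h.ne
        rcases lt_or_gt_of_ne hwne with hws | hws
        · have hA0 : A w x i j = 0 := A_supp w x h hws
          have ha0 : a i j = 0 := ha3 i j h hws
          rw [ha0] at hx'
          rw [hA0] at hABs
          exact ⟨ha0.trans hA0.symm, by linarith⟩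
        · have hB0 : B w x i j = 0 := B_supp w x h hws
          have hb0 : b i j = 0 := hb3 i j h hws
          rw [hb0] at hx'
          rw [hB0] at hABs
          exact ⟨by linarith, hb0.trans hB0.symm⟩
      · subst h
        rw [ha2, hb2, A_diag, B_diag]; exact ⟨rfl, rfl⟩
      · rw [ha1 i j h, hb1 i j h, A_lower w x h, B_lower w x h]; exact ⟨rfl, rfl⟩
  constructor <;> ext i j
  · exact (H ((j : ℕ) - i + 1) i j (by omega)).1
  · exact (H ((j : ℕ) - i + 1) i j (by omega)).2



lemma PuP_apply {w : Equiv.Perm (Fin n)} (hw : w⁻¹ = w) (u : Matrix (Fin n) (Fin n) ℝ)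
    (i j : Fin n) : (w.permMatrix ℝ * u * w.permMatrix ℝ) i j = u (w i) (w j) := by
  have hsymm : w.symm = w := by rw [← Equiv.Perm.inv_def]; exact hw
  rw [Equiv.Perm.permMatrix, PEquiv.toMatrix_toPEquiv_mul, PEquiv.mul_toMatrix_toPEquiv]
  simp [Matrix.submatrix_apply, hsymm]

end Stmt8Aux

open Stmt8Aux in
/-- Unique factorization `x = x₋ x₊` with `x₋ ∈ U⁻ = U ∩ wUᵀw` and `x₊ ∈ U⁺ = U ∩ wUw`,
for `w` an involutive permutation matrix. -/
theorem stmt8 (n : ℕ) (w : Equiv.Perm (Fin n)) (hw : w⁻¹ = w)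
    (x : Matrix (Fin n) (Fin n) ℝ) (hx : IsUniUpper x) :
    ∃! p : Matrix (Fin n) (Fin n) ℝ × Matrix (Fin n) (Fin n) ℝ,
      (IsUniUpper p.1 ∧ ∃ u, IsUniUpper uᵀ ∧ p.1 = w.permMatrix ℝ * u * w.permMatrix ℝ) ∧
      (IsUniUpper p.2 ∧ ∃ u, IsUniUpper u ∧ p.2 = w.permMatrix ℝ * u * w.permMatrix ℝ) ∧
      x = p.1 * p.2 := by
  have hww : ∀ i, w (w i) = i := by
    intro i
    have h : w⁻¹ (w i) = i := w.symm_apply_apply i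
    rwa [hw] at h
  refine ⟨(A w x, B w x), ⟨⟨?_, (A w x).submatrix w w, ?_, ?_⟩, ⟨?_, (B w x).submatrix w w, ?_, ?_⟩, mul_AB hx⟩, ?_⟩
  · exact ⟨fun i j h => A_lower w x h, fun i => A_diag w x i⟩
  · constructor
    · intro i j hji
      simp only [Matrix.transpose_apply, Matrix.submatrix_apply]
      rcases lt_trichotomy (w j) (w i) with h | h | h
      · exact A_supp w x h (by rw [hww, hww]; exact hji)
      · exact absurd (w.injective h) hji.ne
      · exact A_lower w x h
    · intro i
      simp only [Matrix.transpose_apply, Matrix.submatrix_apply]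
      exact A_diag w x _
  · ext i j
    rw [PuP_apply hw]
    simp [Matrix.submatrix_apply, hww]
  · exact ⟨fun i j h => B_lower w x h, fun i => B_diag w x i⟩
  · constructor
    · intro i j hji
      simp only [Matrix.submatrix_apply]
      rcases lt_trichotomy (w i) (w j) with h | h | h
      · exact B_supp w x h (by rw [hww, hww]; exact hji)
      · exact absurd (w.injective h) hji.ne'
      · exact B_lower w x h
    · intro i
      simp only [Matrix.submatrix_apply]
      exact B_diag w x _
  · ext i j
    rw [PuP_apply hw]
    simp [Matrix.submatrix_apply, hww]
  · rintro ⟨a, b⟩ ⟨⟨ha, u₁, hu₁, he₁⟩, ⟨hb, u₂, hu₂, he₂⟩, hab⟩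
    dsimp only at ha hb he₁ he₂ hab
    have ha3 : ∀ i j : Fin n, i < j → w i < w j → a i j = 0 := by
      intro i j _ hwij
      rw [he₁, PuP_apply hw]
      exact hu₁.1 (w j) (w i) hwij
    have hb3 : ∀ i j : Fin n, i < j → w j < w i → b i j = 0 := by
      intro i j _ hwij
      rw [he₂, PuP_apply hw]
      exact hu₂.1 (w i) (w j) hwij
    obtain ⟨hA, hB⟩ := unique_AB a b ha.1 ha.2 ha3 hb.1 hb.2 hb3 hab
    exact Prod.ext hA hB
end

section
/- Let v be an involutive permutation with a free rise (i,j) of type ff (i.e., i < j, v(i) = i, v(j) = j, and there is no k with i < k < j and i < v(k) < j). Then w = v · (i j) is an involution and the number of inversion classes |Inv(w)/∼| equals |Inv(v)/∼| + 1. -/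
open Matrix

/-- The set of inversions of a permutation, as a subtype. -/
def InvSet {n : ℕ} (w : Equiv.Perm (Fin n)) :=
  {p : Fin n × Fin n // p.1 < p.2 ∧ w p.2 < w p.1}

/-- The identification `(i,j) ∼ (w j, w i)` on inversions. -/
def invRel {n : ℕ} (w : Equiv.Perm (Fin n)) (p q : InvSet w) : Prop :=
  q.1 = p.1 ∨ q.1 = (w p.1.2, w p.1.1)

/-- The number of equivalence classes of inversions under `(i,j) ∼ (w j, w i)`. -/
noncomputable def invClassCount {n : ℕ} (w : Equiv.Perm (Fin n)) : ℕ :=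
  Nat.card (Quot (invRel w))

variable {n : ℕ}

instance (u : Equiv.Perm (Fin n)) : Fintype (InvSet u) := by unfold InvSet; infer_instance
instance (u : Equiv.Perm (Fin n)) : DecidableEq (InvSet u) := by unfold InvSet; infer_instance
instance (u : Equiv.Perm (Fin n)) : DecidableRel (invRel u) := by
  unfold invRel; exact fun p q => instDecidableOr

def partner (u : Equiv.Perm (Fin n)) (hu : ∀ i, u (u i) = i) (p : InvSet u) : InvSet u :=
  ⟨(u p.1.2, u p.1.1), p.2.2, by simpa only [hu] using p.2.1⟩

lemma partner_partner (u : Equiv.Perm (Fin n)) (hu : ∀ i, u (u i) = i) (p : InvSet u) :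
    partner u hu (partner u hu p) = p := by
  apply Subtype.ext
  simp [partner, hu]

lemma invRel_iff (u : Equiv.Perm (Fin n)) (hu : ∀ i, u (u i) = i) (p q : InvSet u) :
    invRel u p q ↔ (q = p ∨ q = partner u hu p) := by
  unfold invRel
  constructor
  · rintro (h | h)
    · exact Or.inl (Subtype.ext h)
    · exact Or.inr (Subtype.ext h)
  · rintro (h | h)
    · exact Or.inl (congrArg _ h)
    · exact Or.inr (congrArg _ h)

lemma invRel_equivalence (u : Equiv.Perm (Fin n)) (hu : ∀ i, u (u i) = i) :
    Equivalence (invRel u) := by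
  constructor
  · intro p; exact Or.inl rfl
  · intro p q h
    rw [invRel_iff u hu] at *
    rcases h with h | h
    · exact Or.inl h.symm
    · right; rw [h, partner_partner]
  · intro p q r h1 h2
    rw [invRel_iff u hu] at *
    rcases h1 with h1 | h1 <;> rcases h2 with h2 | h2 <;> subst h1 <;> subst h2
    · exact Or.inl rfl
    · exact Or.inr rfl
    · exact Or.inr rfl
    · exact Or.inl (partner_partner u hu p)

open Finset in
lemma two_mul_invClassCount (u : Equiv.Perm (Fin n)) (hu : ∀ i, u (u i) = i) :
    2 * invClassCount u =
      Nat.card (InvSet u) + Nat.card {x : InvSet u // partner u hu x = x} := by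
  classical
  let s : Setoid (InvSet u) := ⟨invRel u, invRel_equivalence u hu⟩
  have hQ : Quot (invRel u) = Quotient s := rfl
  letI : Fintype (Quotient s) := Quotient.fintype s
  rw [invClassCount, hQ, Nat.card_eq_fintype_card, Nat.card_eq_fintype_card,
    Nat.card_eq_fintype_card]
  rw [Fintype.card_subtype]
  have h1 : Fintype.card (InvSet u) =
      ∑ q : Quotient s, (univ.filter fun x : InvSet u => Quotient.mk s x = q).card := by
    rw [← Finset.card_univ]
    exact Finset.card_eq_sum_card_fiberwise (fun x _ => Finset.mem_univ _)
  have h2 : (univ.filter fun x : InvSet u => partner u hu x = x).card =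
      ∑ q : Quotient s, ((univ.filter fun x : InvSet u => partner u hu x = x).filter
        fun x => Quotient.mk s x = q).card := by
    exact Finset.card_eq_sum_card_fiberwise (fun x _ => Finset.mem_univ _)
  rw [h1, h2, ← Finset.sum_add_distrib]
  have key : ∀ q : Quotient s,
      (univ.filter fun x : InvSet u => Quotient.mk s x = q).card +
      ((univ.filter fun x : InvSet u => partner u hu x = x).filter
        fun x => Quotient.mk s x = q).card = 2 := by
    intro q
    induction q using Quotient.ind with
    | _ a =>
    have hmk : ∀ x : InvSet u, Quotient.mk s x = Quotient.mk s a ↔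
        (x = a ∨ x = partner u hu a) := by
      intro x
      rw [Quotient.eq]
      show invRel u x a ↔ _
      rw [invRel_iff u hu]
      constructor
      · rintro (h | h)
        · exact Or.inl h.symm
        · right; rw [h, partner_partner]
      · rintro (h | h)
        · exact Or.inl h.symm
        · right; rw [h, partner_partner]
    by_cases hfix : partner u hu a = a
    · have e1 : (univ.filter fun x : InvSet u => Quotient.mk s x = Quotient.mk s a) = {a} := by
        ext x
        simp only [Finset.mem_filter, Finset.mem_univ, true_and, Finset.mem_singleton, hmk, hfix,
          or_self]
      have e2 : ((univ.filter fun x : InvSet u => partner u hu x = x).filter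
          fun x => Quotient.mk s x = Quotient.mk s a) = {a} := by
        ext x
        simp only [Finset.mem_filter, Finset.mem_univ, true_and, Finset.mem_singleton, hmk, hfix,
          or_self]
        constructor
        · rintro ⟨-, h⟩; exact h
        · rintro rfl; exact ⟨hfix, rfl⟩
      rw [e1, e2]; rfl
    · have e1 : (univ.filter fun x : InvSet u => Quotient.mk s x = Quotient.mk s a)
          = {a, partner u hu a} := by
        ext x
        simp only [Finset.mem_filter, Finset.mem_univ, true_and, Finset.mem_insert,
          Finset.mem_singleton, hmk]
      have e2 : ((univ.filter fun x : InvSet u => partner u hu x = x).filter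
          fun x => Quotient.mk s x = Quotient.mk s a) = ∅ := by
        ext x
        simp only [Finset.mem_filter, Finset.mem_univ, true_and, Finset.notMem_empty, iff_false,
          not_and, hmk]
        rintro h (rfl | rfl)
        · exact hfix h
        · exact hfix (by rw [← h, partner_partner])
      rw [e1, e2, Finset.card_empty, Finset.card_pair (fun h => hfix h.symm)]
  simp only [key, Finset.sum_const, Finset.card_univ, smul_eq_mul]
  ring

lemma nat_card_option (α : Type*) [Fintype α] : Nat.card (Option α) = Nat.card α + 1 := by
  simp [Nat.card_eq_fintype_card]

def FixSet {n : ℕ} (u : Equiv.Perm (Fin n)) := {p : Fin n × Fin n // p.1 < p.2 ∧ u p.1 = p.2}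

instance (u : Equiv.Perm (Fin n)) : Fintype (FixSet u) := by unfold FixSet; infer_instance

def fixEquiv (u : Equiv.Perm (Fin n)) (hu : ∀ i, u (u i) = i) :
    {x : InvSet u // partner u hu x = x} ≃ FixSet u where
  toFun x := ⟨x.1.1, x.1.2.1, congrArg Prod.snd (congrArg Subtype.val x.2)⟩
  invFun p := ⟨⟨p.1, p.2.1, by
    have : u p.1.2 = p.1.1 := by rw [← p.2.2, hu]
    rw [this, p.2.2]; exact p.2.1⟩, by
    apply Subtype.ext
    apply Prod.ext
    · show u p.1.2 = p.1.1; rw [← p.2.2, hu]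
    · show u p.1.1 = p.1.2; exact p.2.2⟩
  left_inv x := by apply Subtype.ext; apply Subtype.ext; rfl
  right_inv p := by apply Subtype.ext; rfl

section Main

variable {n : ℕ} {v : Equiv.Perm (Fin n)} {i j : Fin n}

/-- forward pair map from inversions of `w = v * swap i j` to inversions of `v`. -/
def Fmap (v : Equiv.Perm (Fin n)) (i j : Fin n) (p : Fin n × Fin n) : Fin n × Fin n :=
  if p.1 = i ∧ i < v p.2 then (j, p.2) else if p.2 = j ∧ v p.1 < j then (p.1, i) else p

/-- backward pair map. -/
def Gmap (v : Equiv.Perm (Fin n)) (i j : Fin n) (x : Fin n × Fin n) : Fin n × Fin n :=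
  if x.1 = j ∧ i < v x.2 then (i, x.2) else if x.2 = i ∧ v x.1 < j then (x.1, j) else x

lemma w_ne (hi : v i = i) (hj : v j = j) {x : Fin n} (h1 : x ≠ i) (h2 : x ≠ j) :
    (v * Equiv.swap i j) x = v x := by
  simp [Equiv.Perm.mul_apply, Equiv.swap_apply_of_ne_of_ne h1 h2]

lemma w_i (hj : v j = j) : (v * Equiv.swap i j) i = j := by
  simp [Equiv.Perm.mul_apply, hj]

lemma w_j (hi : v i = i) : (v * Equiv.swap i j) j = i := by
  simp [Equiv.Perm.mul_apply, hi]

variable (hv : ∀ i, v (v i) = i) (hij : i < j) (hi : v i = i) (hj : v j = j)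
  (hfree : ∀ k : Fin n, i < k → k < j → ¬(i < v k ∧ v k < j))

include hv hi in
lemma vne_i {a : Fin n} (h : a ≠ i) : v a ≠ i := fun e => h (by rw [← hv a, e, hi])

include hv hj in
lemma vne_j {a : Fin n} (h : a ≠ j) : v a ≠ j := fun e => h (by rw [← hv a, e, hj])

include hv hij hi hj hfree in
lemma F_mem (p : Fin n × Fin n) (h1 : p.1 < p.2)
    (h2 : (v * Equiv.swap i j) p.2 < (v * Equiv.swap i j) p.1)
    (hne : ¬(p.1 = i ∧ p.2 = j)) :
    (Fmap v i j p).1 < (Fmap v i j p).2 ∧ v (Fmap v i j p).2 < v (Fmap v i j p).1 := by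
  obtain ⟨a, b⟩ := p
  dsimp only at h1 h2 hne
  unfold Fmap
  dsimp only
  split_ifs with hc1 hc2
  · obtain ⟨ha, hvb⟩ := hc1
    have hbj : b ≠ j := fun hb => hne ⟨ha, hb⟩
    have hib : i < b := ha ▸ h1
    have hbi : b ≠ i := ne_of_gt hib
    rw [w_ne hi hj hbi hbj, ha, w_i hj] at h2
    have hjb : j < b := by
      rcases lt_trichotomy b j with h | h | h
      · exact absurd ⟨hvb, h2⟩ (hfree b hib h)
      · exact absurd h hbj
      · exact h
    show j < b ∧ v b < v j
    refine ⟨hjb, ?_⟩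
    rw [hj]; exact h2
  · obtain ⟨hb, hva⟩ := hc2
    have haj : a ≠ j := ne_of_lt (hb ▸ h1)
    have hai : a ≠ i := fun ha => hc1 ⟨ha, by rw [hb, hj]; exact hij⟩
    rw [hb, w_ne hi hj hai haj, w_j hi] at h2
    have hia : a < i := by
      rcases lt_trichotomy a i with h | h | h
      · exact h
      · exact absurd h hai
      · exact absurd ⟨h2, hva⟩ (hfree a h (hb ▸ h1))
    show a < i ∧ v i < v a
    refine ⟨hia, ?_⟩
    rw [hi]; exact h2
  · show a < b ∧ v b < v a
    refine ⟨h1, ?_⟩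
    by_cases hai : a = i
    · have hbi : b ≠ i := ne_of_gt (hai ▸ h1)
      have hbj : b ≠ j := by
        intro hb
        exact hc2 ⟨hb, by rw [hai, hi]; exact hij⟩
      have hle : ¬(i < v b) := fun h => hc1 ⟨hai, h⟩
      rw [hai, hi]
      exact lt_of_le_of_ne (not_lt.mp hle) (vne_i hv hi hbi)
    · by_cases haj : a = j
      · have hbi : b ≠ i := ne_of_gt (lt_trans hij (haj ▸ h1))
        have hbj : b ≠ j := ne_of_gt (haj ▸ h1)
        rw [w_ne hi hj hbi hbj, haj, w_j hi] at h2
        rw [haj, hj]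
        exact lt_trans h2 hij
      · by_cases hbi : b = i
        · rw [hbi, w_i hj, w_ne hi hj hai haj] at h2
          rw [hbi, hi]
          exact lt_trans hij h2
        · by_cases hbj : b = j
          · have hle : ¬(v a < j) := fun h => hc2 ⟨hbj, h⟩
            rw [hbj, hj]
            exact lt_of_le_of_ne (not_lt.mp hle) (Ne.symm (vne_j hv hj haj))
          · rw [w_ne hi hj hai haj, w_ne hi hj hbi hbj] at h2
            exact h2

include hv hij hi hj in
lemma G_mem (p : Fin n × Fin n) (h1 : p.1 < p.2) (h2 : v p.2 < v p.1) :
    ((Gmap v i j p).1 < (Gmap v i j p).2 ∧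
      (v * Equiv.swap i j) (Gmap v i j p).2 < (v * Equiv.swap i j) (Gmap v i j p).1) ∧
      ¬((Gmap v i j p).1 = i ∧ (Gmap v i j p).2 = j) := by
  obtain ⟨a, b⟩ := p
  dsimp only at h1 h2
  unfold Gmap
  dsimp only
  split_ifs with hc1 hc2
  · obtain ⟨ha, hvb⟩ := hc1
    have hjb : j < b := ha ▸ h1
    have hbi : b ≠ i := ne_of_gt (lt_trans hij hjb)
    have hbj : b ≠ j := ne_of_gt hjb
    show (i < b ∧ (v * Equiv.swap i j) b < (v * Equiv.swap i j) i) ∧ ¬(i = i ∧ b = j)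
    rw [w_ne hi hj hbi hbj, w_i hj]
    refine ⟨⟨lt_trans hij hjb, ?_⟩, fun h => hbj h.2⟩
    rw [ha, hj] at h2; exact h2
  · obtain ⟨hb, hva⟩ := hc2
    have hai' : a < i := hb ▸ h1
    have hai : a ≠ i := ne_of_lt hai'
    have haj : a ≠ j := ne_of_lt (lt_trans hai' hij)
    show (a < j ∧ (v * Equiv.swap i j) j < (v * Equiv.swap i j) a) ∧ ¬(a = i ∧ j = j)
    rw [w_ne hi hj hai haj, w_j hi]
    rw [hb, hi] at h2
    exact ⟨⟨lt_trans hai' hij, h2⟩, fun h => hai h.1⟩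
  · have hkey : ¬(a = i ∧ b = j) := by
      rintro ⟨ha, hb⟩
      rw [ha, hb, hi, hj] at h2
      exact absurd h2 (not_lt.mpr (le_of_lt hij))
    show (a < b ∧ (v * Equiv.swap i j) b < (v * Equiv.swap i j) a) ∧ ¬(a = i ∧ b = j)
    refine ⟨⟨h1, ?_⟩, hkey⟩
    by_cases hai : a = i
    · have hbi : b ≠ i := ne_of_gt (hai ▸ h1)
      have hbj : b ≠ j := fun h => hkey ⟨hai, h⟩
      rw [w_ne hi hj hbi hbj, hai, w_i hj]
      rw [hai, hi] at h2
      exact lt_trans h2 hij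
    · by_cases haj : a = j
      · have hbi : b ≠ i := ne_of_gt (lt_trans hij (haj ▸ h1))
        have hbj : b ≠ j := ne_of_gt (haj ▸ h1)
        rw [w_ne hi hj hbi hbj, haj, w_j hi]
        have hle : ¬(i < v b) := fun h => hc1 ⟨haj, h⟩
        exact lt_of_le_of_ne (not_lt.mp hle) (vne_i hv hi hbi)
      · by_cases hbi : b = i
        · rw [hbi, w_i hj, w_ne hi hj hai haj]
          have hle : ¬(v a < j) := fun h => hc2 ⟨hbi, h⟩
          exact lt_of_le_of_ne (not_lt.mp hle) (Ne.symm (vne_j hv hj haj))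
        · by_cases hbj : b = j
          · rw [hbj, hj] at h2
            rw [hbj, w_j hi, w_ne hi hj hai haj]
            exact lt_trans hij h2
          · rw [w_ne hi hj hai haj, w_ne hi hj hbi hbj]
            exact h2

include hv hij hi hj in
lemma GF (p : Fin n × Fin n) (h1 : p.1 < p.2)
    (h2 : (v * Equiv.swap i j) p.2 < (v * Equiv.swap i j) p.1)
    (hne : ¬(p.1 = i ∧ p.2 = j)) : Gmap v i j (Fmap v i j p) = p := by
  obtain ⟨a, b⟩ := p
  dsimp only at h1 h2 hne
  unfold Fmap
  dsimp only
  split_ifs with hc1 hc2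
  · obtain ⟨ha, hvb⟩ := hc1
    unfold Gmap
    dsimp only
    rw [if_pos ⟨rfl, hvb⟩, ha]
  · obtain ⟨hb, hva⟩ := hc2
    have haj : a ≠ j := ne_of_lt (hb ▸ h1)
    unfold Gmap
    dsimp only
    rw [if_neg (fun h => haj h.1), if_pos ⟨rfl, hva⟩, hb]
  · unfold Gmap
    dsimp only
    rw [if_neg ?X, if_neg ?Y]
    case X =>
      rintro ⟨haj, hvb⟩
      have hbi : b ≠ i := ne_of_gt (lt_trans hij (haj ▸ h1))
      have hbj : b ≠ j := ne_of_gt (haj ▸ h1)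
      rw [w_ne hi hj hbi hbj, haj, w_j hi] at h2
      exact absurd hvb (not_lt.mpr (le_of_lt h2))
    case Y =>
      rintro ⟨hbi, hva⟩
      have hai : a ≠ i := ne_of_lt (hbi ▸ h1)
      have haj : a ≠ j := ne_of_lt (lt_trans (hbi ▸ h1) hij)
      rw [hbi, w_i hj, w_ne hi hj hai haj] at h2
      exact absurd hva (not_lt.mpr (le_of_lt h2))

include hv hij hi hj in
lemma FG (p : Fin n × Fin n) (h1 : p.1 < p.2) (h2 : v p.2 < v p.1) :
    Fmap v i j (Gmap v i j p) = p := by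
  obtain ⟨a, b⟩ := p
  dsimp only at h1 h2
  unfold Gmap
  dsimp only
  split_ifs with hc1 hc2
  · obtain ⟨ha, hvb⟩ := hc1
    unfold Fmap
    dsimp only
    rw [if_pos ⟨rfl, hvb⟩, ha]
  · obtain ⟨hb, hva⟩ := hc2
    have hai : a ≠ i := ne_of_lt (hb ▸ h1)
    unfold Fmap
    dsimp only
    rw [if_neg (fun h => hai h.1), if_pos ⟨rfl, hva⟩, hb]
  · unfold Fmap
    dsimp only
    rw [if_neg ?X, if_neg ?Y]
    case X =>
      rintro ⟨ha, hvb⟩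
      rw [ha, hi] at h2
      exact absurd hvb (not_lt.mpr (le_of_lt h2))
    case Y =>
      rintro ⟨hb, hva⟩
      rw [hb, hj] at h2
      exact absurd hva (not_lt.mpr (le_of_lt h2))

include hv hij hi hj hfree in
lemma invEquiv : Nonempty (InvSet (v * Equiv.swap i j) ≃ Option (InvSet v)) := by
  refine ⟨{
    toFun := fun p => if h : p.1.1 = i ∧ p.1.2 = j then none
      else some ⟨Fmap v i j p.1, F_mem hv hij hi hj hfree p.1 p.2.1 p.2.2 h⟩
    invFun := fun o => o.elim ⟨(i, j), hij, by rw [w_i hj, w_j hi]; exact hij⟩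
      (fun x => ⟨Gmap v i j x.1, (G_mem hv hij hi hj x.1 x.2.1 x.2.2).1⟩)
    left_inv := ?_
    right_inv := ?_ }⟩
  · intro p
    by_cases h : p.1.1 = i ∧ p.1.2 = j
    · simp only [dif_pos h, Option.elim]
      apply Subtype.ext
      show (i, j) = p.1
      exact (Prod.ext h.1 h.2).symm
    · simp only [dif_neg h, Option.elim]
      apply Subtype.ext
      show Gmap v i j (Fmap v i j p.1) = p.1
      exact GF hv hij hi hj p.1 p.2.1 p.2.2 h
  · intro o
    cases o with
    | none => exact dif_pos ⟨rfl, rfl⟩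
    | some x =>
      simp only [Option.elim]
      refine (dif_neg ((G_mem hv hij hi hj x.1 x.2.1 x.2.2).2)).trans ?_
      congr 1
      apply Subtype.ext
      show Fmap v i j (Gmap v i j x.1) = x.1
      exact FG hv hij hi hj x.1 x.2.1 x.2.2

include hv hij hi hj in
lemma fixEquivOpt : Nonempty (FixSet (v * Equiv.swap i j) ≃ Option (FixSet v)) := by
  refine ⟨{
    toFun := fun p => if h : p.1.1 = i then none
      else some ⟨p.1, p.2.1, by
        have haj : p.1.1 ≠ j := by
          intro ha
          have hthis := p.2.2
          rw [ha, w_j hi] at hthis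
          have h2 := p.2.1
          rw [ha, ← hthis] at h2
          exact lt_irrefl i (lt_trans hij h2)
        rw [← w_ne hi hj h haj]
        exact p.2.2⟩
    invFun := fun o => o.elim ⟨(i, j), hij, w_i hj⟩
      (fun x => ⟨x.1, x.2.1, by
        have hai : x.1.1 ≠ i := by
          intro ha
          have hthis := x.2.2
          rw [ha, hi] at hthis
          have h2 := x.2.1
          rw [ha, ← hthis] at h2
          exact lt_irrefl i h2
        have haj : x.1.1 ≠ j := by
          intro ha
          have hthis := x.2.2
          rw [ha, hj] at hthis
          have h2 := x.2.1
          rw [ha, ← hthis] at h2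
          exact lt_irrefl j h2
        rw [w_ne hi hj hai haj]
        exact x.2.2⟩)
    left_inv := ?_
    right_inv := ?_ }⟩
  · intro p
    by_cases h : p.1.1 = i
    · simp only [dif_pos h, Option.elim]
      apply Subtype.ext
      show (i, j) = p.1
      have hb : p.1.2 = j := by
        have hthis := p.2.2
        rw [h, w_i hj] at hthis
        exact hthis.symm
      exact (Prod.ext h hb).symm
    · simp only [dif_neg h, Option.elim]
      exact Subtype.ext rfl
  · intro o
    cases o with
    | none => exact dif_pos rfl
    | some x =>
      simp only [Option.elim]
      have hai : x.1.1 ≠ i := by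
        intro ha
        have hthis := x.2.2
        rw [ha, hi] at hthis
        have h2 := x.2.1
        rw [ha, ← hthis] at h2
        exact lt_irrefl i h2
      refine (dif_neg hai).trans ?_
      exact congrArg some (Subtype.ext rfl)

end Main

/-- If `v` is an involution with a free rise `(i,j)` of type `ff`, then `w = v·(i j)` is an
involution and its number of inversion classes is one more than that of `v`. -/
theorem stmt11 (n : ℕ) (v : Equiv.Perm (Fin n)) (hv : ∀ i, v (v i) = i)
    (i j : Fin n) (hij : i < j) (hi : v i = i) (hj : v j = j)
    (hfree : ¬ ∃ k : Fin n, i < k ∧ k < j ∧ i < v k ∧ v k < j) :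
    (∀ x, (v * Equiv.swap i j) ((v * Equiv.swap i j) x) = x) ∧
    invClassCount (v * Equiv.swap i j) = invClassCount v + 1 := by
  have hfree' : ∀ k : Fin n, i < k → k < j → ¬(i < v k ∧ v k < j) := by
    intro k h1 h2 h3
    exact hfree ⟨k, h1, h2, h3.1, h3.2⟩
  have hswap : ∀ x, Equiv.swap i j (v x) = v (Equiv.swap i j x) := by
    intro x
    by_cases h1 : x = i
    · rw [h1, hi, Equiv.swap_apply_left, hj]
    · by_cases h2 : x = j
      · rw [h2, hj, Equiv.swap_apply_right, hi]
      · rw [Equiv.swap_apply_of_ne_of_ne h1 h2,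
          Equiv.swap_apply_of_ne_of_ne (vne_i hv hi h1) (vne_j hv hj h2)]
  have hw : ∀ x, (v * Equiv.swap i j) ((v * Equiv.swap i j) x) = x := by
    intro x
    show v (Equiv.swap i j (v (Equiv.swap i j x))) = x
    rw [hswap (Equiv.swap i j x), Equiv.swap_apply_self, hv]
  refine ⟨hw, ?_⟩
  have e1 := two_mul_invClassCount (v * Equiv.swap i j) hw
  have e2 := two_mul_invClassCount v hv
  have c1 : Nat.card (InvSet (v * Equiv.swap i j)) = Nat.card (InvSet v) + 1 := by
    obtain ⟨e⟩ := invEquiv hv hij hi hj hfree'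
    rw [Nat.card_congr e, nat_card_option]
  have c2 : Nat.card {x : InvSet (v * Equiv.swap i j) // partner _ hw x = x} =
      Nat.card {x : InvSet v // partner v hv x = x} + 1 := by
    obtain ⟨e⟩ := fixEquivOpt hv hij hi hj
    rw [Nat.card_congr (fixEquiv _ hw), Nat.card_congr e, nat_card_option,
      Nat.card_congr (fixEquiv v hv)]
  omega
end

section
/- Let e, f, g, t ∈ ℝ with e² + f² + g² = 1, t = 1 − e², f² (1 + e²) = e² (1 − e²), f = εδ e g for signs ε, δ ∈ {±1}. Then the 4×4 symmetric matrix Q with rows (0, e, f, g), (e, δt, −δef, −εf), (f, −δef, −δt, εe), (g, −εf, εe, 0) satisfies Q² = I. -/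
open Matrix

set_option maxHeartbeats 1000000 in
/-- The crossing `ee`-case Richardson curve: under the stated relations the 4×4 symmetric
matrix `Q` is an involution. -/
theorem stmt15 (e f g t ε δ : ℝ)
    (hsum : e ^ 2 + f ^ 2 + g ^ 2 = 1) (ht : t = 1 - e ^ 2)
    (hf : f ^ 2 * (1 + e ^ 2) = e ^ 2 * (1 - e ^ 2)) (hfg : f = ε * δ * e * g)
    (hε : ε = 1 ∨ ε = -1) (hδ : δ = 1 ∨ δ = -1) :
    let Q : Matrix (Fin 4) (Fin 4) ℝ :=
      !![0, e, f, g;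
         e, δ * t, -δ * e * f, -ε * f;
         f, -δ * e * f, -δ * t, ε * e;
         g, -ε * f, ε * e, 0]
    Q * Q = 1 := by
  intro Q
  subst ht
  rcases hε with rfl | rfl <;> rcases hδ with rfl | rfl <;>
    (simp only [one_mul, neg_mul, mul_neg, neg_neg, mul_one] at hfg ⊢; subst hfg) <;>
    (ext i j; fin_cases i <;> fin_cases j <;>
      simp [Q, Matrix.mul_apply, Fin.sum_univ_four, Matrix.one_apply] <;>
      nlinarith [hsum, sq_nonneg e, sq_nonneg g, sq_nonneg (e*g), sq_nonneg (e+g), sq_nonneg (e-g)])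
end

section
/- The map π : Z ↦ θ Z θ⁻¹, where θ is the upper-triangular factor with positive diagonal in the Cholesky decomposition θᵀθ = I + Zᵀ Z, sends every invertible involution Z (Z² = I) to an orthogonal involution: π(Z)² = I and π(Z) ∈ O(n). Moreover π(Z) = Z whenever Z is already an orthogonal involution. -/
open Matrix

/-- The projection `π : Z ↦ θ Z θ⁻¹`, with `θᵀθ = I + ZᵀZ` the Cholesky factor, sends every
invertible involution to an orthogonal involution and fixes orthogonal involutions. -/
theorem stmt16 (n : ℕ) (Z θ : Matrix (Fin n) (Fin n) ℝ)
    (hZ : Z * Z = 1)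
    (hθtri : ∀ i j : Fin n, j < i → θ i j = 0) (hθpos : ∀ i : Fin n, 0 < θ i i)
    (hθ : θᵀ * θ = 1 + Zᵀ * Z) :
    (θ * Z * θ⁻¹) * (θ * Z * θ⁻¹) = 1 ∧
    (θ * Z * θ⁻¹)ᵀ * (θ * Z * θ⁻¹) = 1 ∧
    (Zᵀ * Z = 1 → θ * Z * θ⁻¹ = Z) := by
  have htri : BlockTriangular θ id := fun i j h => hθtri i j h
  have hdet : θ.det = ∏ i, θ i i := by
    rw [Matrix.det_of_upperTriangular htri]
  have hdetpos : 0 < θ.det := hdet ▸ Finset.prod_pos (fun i _ => hθpos i)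
  have hu : IsUnit θ.det := (isUnit_iff_ne_zero).mpr hdetpos.ne'
  have h1 : θ * θ⁻¹ = 1 := Matrix.mul_nonsing_inv θ hu
  have h2 : θ⁻¹ * θ = 1 := Matrix.nonsing_inv_mul θ hu
  refine ⟨?_, ?_, ?_⟩
  · calc (θ * Z * θ⁻¹) * (θ * Z * θ⁻¹) = θ * Z * (θ⁻¹ * θ) * Z * θ⁻¹ := by
          noncomm_ring
      _ = θ * (Z * Z) * θ⁻¹ := by rw [h2]; noncomm_ring
      _ = 1 := by rw [hZ, mul_one, h1]
  · have key : Zᵀ * (θᵀ * θ) * Z = θᵀ * θ := by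
      rw [hθ]
      have hZt : Zᵀ * Zᵀ = 1 := by
        rw [← Matrix.transpose_mul, hZ, Matrix.transpose_one]
      calc Zᵀ * (1 + Zᵀ * Z) * Z = Zᵀ * Z + (Zᵀ * Zᵀ) * (Z * Z) := by noncomm_ring
        _ = 1 + Zᵀ * Z := by rw [hZt, hZ, one_mul, add_comm]
    calc (θ * Z * θ⁻¹)ᵀ * (θ * Z * θ⁻¹)
        = θ⁻¹ᵀ * (Zᵀ * (θᵀ * θ) * Z) * θ⁻¹ := by
          simp only [Matrix.transpose_mul]; noncomm_ring
      _ = θ⁻¹ᵀ * (θᵀ * θ) * θ⁻¹ := by rw [key]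
      _ = (θ * θ⁻¹)ᵀ * (θ * θ⁻¹) := by
          simp only [Matrix.transpose_mul]; noncomm_ring
      _ = 1 := by rw [h1, Matrix.transpose_one, one_mul]
  · intro hO
    have hθ2 : θᵀ * θ = (2 : ℝ) • (1 : Matrix (Fin n) (Fin n) ℝ) := by
      rw [hθ, hO]; norm_num [two_smul]
    have hθt : θᵀ = (2:ℝ) • θ⁻¹ := by
      calc θᵀ = θᵀ * (θ * θ⁻¹) := by rw [h1, mul_one]
        _ = (θᵀ * θ) * θ⁻¹ := by rw [mul_assoc]
        _ = (2:ℝ) • θ⁻¹ := by rw [hθ2, Matrix.smul_mul, one_mul]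
    have hinv : θ⁻¹ = (2 : ℝ)⁻¹ • θᵀ := by
      rw [hθt, smul_smul]; norm_num
    haveI : Invertible θ := θ.invertibleOfIsUnitDet hu
    have hinvtri : BlockTriangular θ⁻¹ id :=
      blockTriangular_inv_of_blockTriangular htri
    -- θ is diagonal
    have hdiag : ∀ i j : Fin n, i ≠ j → θ i j = 0 := by
      intro i j hij
      rcases lt_or_gt_of_ne hij with h | h
      · -- i < j : use hinvtri at (j, i)
        have := hinvtri (show (id j : Fin n) > id i from h)
        rw [hinv] at this
        simp only [Matrix.smul_apply, Matrix.transpose_apply, smul_eq_mul] at this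
        have h2ne : (2:ℝ)⁻¹ ≠ 0 := by norm_num
        exact (mul_eq_zero.mp this).resolve_left h2ne
      · exact hθtri i j h
    -- diagonal entries squared equal 2
    have hsq : ∀ i : Fin n, θ i i = Real.sqrt 2 := by
      intro i
      have := congrFun (congrFun hθ2 i) i
      simp only [Matrix.mul_apply, Matrix.transpose_apply, Matrix.smul_apply,
        Matrix.one_apply_eq, smul_eq_mul, mul_one] at this
      have hsum : ∑ k, θ k i * θ k i = θ i i * θ i i := by
        rw [Finset.sum_eq_single i]
        · intro k _ hk; rw [hdiag k i hk, zero_mul]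
        · intro h; exact absurd (Finset.mem_univ i) h
      rw [hsum] at this
      have : θ i i ^ 2 = 2 := by rw [sq]; exact this
      nlinarith [Real.sq_sqrt (by norm_num : (2:ℝ) ≥ 0), hθpos i,
        Real.sqrt_nonneg 2]
    have hθeq : θ = Real.sqrt 2 • (1 : Matrix (Fin n) (Fin n) ℝ) := by
      ext i j
      by_cases h : i = j
      · subst h; simp [hsq i]
      · simp [hdiag i j h, Matrix.one_apply_ne h]
    have hinv2 : θ⁻¹ = (Real.sqrt 2)⁻¹ • (1 : Matrix (Fin n) (Fin n) ℝ) := by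
      apply Matrix.inv_eq_right_inv
      rw [hθeq, Matrix.smul_mul, Matrix.mul_smul, one_mul, smul_smul,
        mul_inv_cancel₀ (by positivity : Real.sqrt 2 ≠ 0), one_smul]
    rw [hinv2, hθeq, Matrix.smul_mul, Matrix.mul_smul, Matrix.smul_mul, one_mul, mul_one,
      smul_smul, inv_mul_cancel₀ (by positivity : Real.sqrt 2 ≠ 0), one_smul]
end
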